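/- Let (W, 𝒞) be a convex geometry and A, B ⊆ W with A finite. Then the following are equivalent: (1) for every C ∈ 𝒞 with A ⊄ C there exists D ∈ 𝒞 with C ⊆ D, A ⊄ D, and A ⊆ D ∪ B; (2) ex(A) ⊆ B; (3) A ⊆ co(A ∩ B). -/

import Mathlib

open Set

def interClosed {W : Type*} (𝒞 : Set (Set W)) : Prop := ∀ 𝒳 ⊆ 𝒞, ⋂₀ 𝒳 ∈ 𝒞

def antiExchange {W : Type*} (𝒞 : Set (Set W)) : Prop :=
  ∀ C ∈ 𝒞, ∀ x y : W, x ∉ C → y ∉ C → x ≠ y →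
    ∃ D ∈ 𝒞, C ⊆ D ∧ ((x ∈ D ∧ y ∉ D) ∨ (x ∉ D ∧ y ∈ D))

def hullOf {W : Type*} (𝒞 : Set (Set W)) (X : Set W) : Set W := ⋂₀ {C | C ∈ 𝒞 ∧ X ⊆ C}

def exOf {W : Type*} (𝒞 : Set (Set W)) (X : Set W) : Set W :=
  {x | x ∈ X ∧ x ∉ hullOf 𝒞 (X \ {x})}

lemma subset_hullOf {W : Type*} (𝒞 : Set (Set W)) (X : Set W) : X ⊆ hullOf 𝒞 X :=
  fun x hx C hC => hC.2 hx

lemma hullOf_subset {W : Type*} {𝒞 : Set (Set W)} {X C : Set W} (hC : C ∈ 𝒞) (h : X ⊆ C) :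
    hullOf 𝒞 X ⊆ C := sInter_subset_of_mem ⟨hC, h⟩

lemma hullOf_mono {W : Type*} {𝒞 : Set (Set W)} {X Y : Set W} (h : X ⊆ Y) :
    hullOf 𝒞 X ⊆ hullOf 𝒞 Y :=
  fun x hx C hC => hx C ⟨hC.1, h.trans hC.2⟩

lemma hullOf_mem {W : Type*} {𝒞 : Set (Set W)} (hI : interClosed 𝒞) (X : Set W) :
    hullOf 𝒞 X ∈ 𝒞 := hI _ (fun _ hC => hC.1)

/-- Peeling lemma: any convex set not containing finite A extends to a convex set
missing exactly one element of A. -/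
lemma peel {W : Type*} {𝒞 : Set (Set W)} (hAE : antiExchange 𝒞) {A : Set W} (hA : A.Finite) :
    ∀ n : ℕ, ∀ D ∈ 𝒞, (A \ D).ncard ≤ n → ¬ A ⊆ D →
      ∃ D' ∈ 𝒞, D ⊆ D' ∧ ∃ a ∈ A, A \ {a} ⊆ D' ∧ a ∉ D' := by
  intro n
  induction n with
  | zero =>
      intro D _ hcard hAD
      exfalso
      have h0 : (A \ D).ncard = 0 := Nat.le_zero.mp hcard
      have : A \ D = ∅ := (Set.ncard_eq_zero (hA.diff : (A \ D).Finite)).mp h0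
      exact hAD (fun x hx => by
        by_contra hxD
        exact absurd (mem_diff_of_mem hx hxD) (by simp [this]))
  | succ n ih =>
      intro D hD hcard hAD
      obtain ⟨a, ha⟩ : (A \ D).Nonempty := by
        rw [diff_nonempty]; exact hAD
      by_cases hone : A \ D ⊆ {a}
      · exact ⟨D, hD, Subset.rfl, a, ha.1, fun x hx => by
          by_contra hxD
          exact hx.2 (hone ⟨hx.1, hxD⟩), ha.2⟩
      · obtain ⟨b, hb, hba⟩ : ∃ b ∈ A \ D, b ≠ a := by
          rcases not_subset.mp hone with ⟨b, hb, hb'⟩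
          exact ⟨b, hb, hb'⟩
        obtain ⟨E, hE, hDE, hcases⟩ := hAE D hD a b ha.2 hb.2 (Ne.symm hba)
        have hdiff : A \ E ⊂ A \ D := by
          constructor
          · exact diff_subset_diff_right hDE
          · intro hsub
            rcases hcases with ⟨haE, hbE⟩ | ⟨haE, hbE⟩
            · exact (hsub ha).2 haE
            · exact (hsub hb).2 hbE
        have hlt : (A \ E).ncard < (A \ D).ncard :=
          Set.ncard_lt_ncard hdiff (hA.diff : (A \ D).Finite)
        have hle : (A \ E).ncard ≤ n := by omega
        have hAE' : ¬ A ⊆ E := by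
          rcases hcases with ⟨_, hbE⟩ | ⟨haE, _⟩
          · exact fun h => hbE (h hb.1)
          · exact fun h => haE (h ha.1)
        obtain ⟨D', hD', hED', rest⟩ := ih E hE hle hAE'
        exact ⟨D', hD', hDE.trans hED', rest⟩

theorem simpler_clause {W : Type*} (𝒞 : Set (Set W))
    (hI : interClosed 𝒞) (hAE : antiExchange 𝒞) (A B : Set W) (hA : A.Finite) :
    ((∀ C ∈ 𝒞, ¬ A ⊆ C → ∃ D ∈ 𝒞, C ⊆ D ∧ ¬ A ⊆ D ∧ A ⊆ D ∪ B) ↔ exOf 𝒞 A ⊆ B) ∧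
    (exOf 𝒞 A ⊆ B ↔ A ⊆ hullOf 𝒞 (A ∩ B)) := by
  -- (2) → (1)
  have h21 : exOf 𝒞 A ⊆ B →
      ∀ C ∈ 𝒞, ¬ A ⊆ C → ∃ D ∈ 𝒞, C ⊆ D ∧ ¬ A ⊆ D ∧ A ⊆ D ∪ B := by
    intro h2 C hC hAC
    obtain ⟨D, hD, hCD, a, haA, hAD, haD⟩ :=
      peel hAE hA (A \ C).ncard C hC le_rfl hAC
    have haex : a ∈ exOf 𝒞 A := ⟨haA, fun h => haD (hullOf_subset hD hAD h)⟩
    refine ⟨D, hD, hCD, fun h => haD (h haA), fun x hx => ?_⟩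
    by_cases hxa : x = a
    · exact Or.inr (hxa ▸ h2 haex)
    · exact Or.inl (hAD ⟨hx, hxa⟩)
  -- (1) → (2)
  have h12 : (∀ C ∈ 𝒞, ¬ A ⊆ C → ∃ D ∈ 𝒞, C ⊆ D ∧ ¬ A ⊆ D ∧ A ⊆ D ∪ B) →
      exOf 𝒞 A ⊆ B := by
    intro h1 x hx
    by_contra hxB
    have hC : hullOf 𝒞 (A \ {x}) ∈ 𝒞 := hullOf_mem hI _
    have hAC : ¬ A ⊆ hullOf 𝒞 (A \ {x}) := fun h => hx.2 (h hx.1)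
    obtain ⟨D, hD, hCD, hAD, hADB⟩ := h1 _ hC hAC
    apply hAD
    intro y hy
    by_cases hyx : y = x
    · subst hyx
      rcases hADB hy with h | h
      · exact h
      · exact absurd h hxB
    · exact hCD (subset_hullOf 𝒞 _ ⟨hy, hyx⟩)
  -- (3) → (2)
  have h32 : A ⊆ hullOf 𝒞 (A ∩ B) → exOf 𝒞 A ⊆ B := by
    intro h3 x hx
    by_contra hxB
    have hsub : A ∩ B ⊆ A \ {x} := fun y hy => ⟨hy.1, fun h => hxB (h ▸ hy.2)⟩
    exact hx.2 (hullOf_mono hsub (h3 hx.1))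
  -- (2) → (3)
  have h23 : exOf 𝒞 A ⊆ B → A ⊆ hullOf 𝒞 (A ∩ B) := by
    intro h2
    by_contra h3
    have hC : hullOf 𝒞 (A ∩ B) ∈ 𝒞 := hullOf_mem hI _
    obtain ⟨D, hD, hCD, a, haA, hAD, haD⟩ :=
      peel hAE hA (A \ hullOf 𝒞 (A ∩ B)).ncard _ hC le_rfl h3
    have haex : a ∈ exOf 𝒞 A := ⟨haA, fun h => haD (hullOf_subset hD hAD h)⟩
    have : a ∈ A ∩ B := ⟨haA, h2 haex⟩
    exact haD (hCD (subset_hullOf 𝒞 _ this))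
  exact ⟨⟨h12, h21⟩, ⟨h23, h32⟩⟩
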